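/- Θ(x) > 0 for all x > 0, where Θ(x) = 2x² ∑_{n≥1}(2π²n⁴x² − 3πn²)e^{−πn²x²}; in particular Θ(x) > 0 for x ≥ 1, and combined with the functional equation x·Θ(x) = Θ(1/x) this gives positivity for all x > 0. -/

import Mathlib

open Real

noncomputable def Theta (x : ℝ) : ℝ :=
  2 * x ^ 2 * ∑' n : ℕ,
    (2 * π ^ 2 * ((n : ℝ) + 1) ^ 4 * x ^ 2 - 3 * π * ((n : ℝ) + 1) ^ 2) *
      Real.exp (-π * ((n : ℝ) + 1) ^ 2 * x ^ 2)

lemma sumNat (k : ℕ) {t : ℝ} (ht : 0 < t) :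
    Summable (fun n : ℕ => (n : ℝ) ^ k * Real.exp (-π * (n : ℝ) ^ 2 * t)) := by
  have hr : ‖Real.exp (-π * t)‖ < 1 := by
    rw [Real.norm_eq_abs, abs_of_pos (Real.exp_pos _)]
    apply Real.exp_lt_one_iff.mpr
    nlinarith [Real.pi_pos]
  apply (summable_pow_mul_geometric_of_norm_lt_one k hr).of_nonneg_of_le
    (fun n => by positivity)
  intro n
  have h1 : Real.exp (-π * (n : ℝ) ^ 2 * t) ≤ Real.exp (-π * t) ^ n := by
    rw [← Real.exp_nat_mul]
    apply Real.exp_le_exp.mpr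
    have h2 : (n : ℝ) ≤ (n : ℝ) ^ 2 := by
      have : (1:ℝ) ≤ (n:ℝ) ∨ (n:ℝ) = 0 := by
        rcases Nat.eq_zero_or_pos n with h | h
        · right; simp [h]
        · left; exact_mod_cast h
      rcases this with h | h
      · nlinarith
      · simp [h]
    nlinarith [Real.pi_pos, mul_le_mul_of_nonneg_left h2 (le_of_lt Real.pi_pos)]
  calc (n : ℝ) ^ k * Real.exp (-π * (n : ℝ) ^ 2 * t)
      ≤ (n : ℝ) ^ k * Real.exp (-π * t) ^ n := by
        apply mul_le_mul_of_nonneg_left h1 (by positivity)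
    _ = (n : ℝ) ^ k * Real.exp (-π * t) ^ n := rfl

lemma sumNat' (k : ℕ) {t : ℝ} (ht : 0 < t) :
    Summable (fun n : ℕ => ((n : ℝ) + 1) ^ k * Real.exp (-π * ((n : ℝ) + 1) ^ 2 * t)) := by
  have := (summable_nat_add_iff 1).mpr (sumNat k ht)
  apply this.congr
  intro n
  push_cast
  ring_nf

lemma sumInt (k : ℕ) {t : ℝ} (ht : 0 < t) :
    Summable (fun n : ℤ => |(n : ℝ)| ^ k * Real.exp (-π * (n : ℝ) ^ 2 * t)) := by
  apply Summable.of_nat_of_neg_add_one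
  · apply (sumNat k ht).congr
    intro n
    push_cast
    rw [abs_of_nonneg (by positivity : (0:ℝ) ≤ (n:ℝ))]
  · apply (sumNat' k ht).congr
    intro n
    push_cast
    rw [abs_of_nonpos (by nlinarith [Nat.cast_nonneg (α := ℝ) n] : -((n:ℝ)+1) ≤ 0)]
    ring_nf

noncomputable def Hf (t : ℝ) : ℝ := ∑' n : ℤ, Real.exp (-π * (n : ℝ) ^ 2 * t)
noncomputable def H1 (t : ℝ) : ℝ :=
  ∑' n : ℤ, (-π * (n : ℝ) ^ 2) * Real.exp (-π * (n : ℝ) ^ 2 * t)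
noncomputable def H2 (t : ℝ) : ℝ :=
  ∑' n : ℤ, (π ^ 2 * (n : ℝ) ^ 4) * Real.exp (-π * (n : ℝ) ^ 2 * t)
noncomputable def Gf (t : ℝ) : ℝ := 2 * t ^ 2 * H2 t + 3 * t * H1 t

lemma sumH {t : ℝ} (ht : 0 < t) :
    Summable (fun n : ℤ => Real.exp (-π * (n : ℝ) ^ 2 * t)) := by
  apply (sumInt 0 ht).congr; intro n; simp

lemma sumH1 {t : ℝ} (ht : 0 < t) :
    Summable (fun n : ℤ => (-π * (n : ℝ) ^ 2) * Real.exp (-π * (n : ℝ) ^ 2 * t)) := by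
  apply (((sumInt 2 ht).mul_left π).neg).congr
  intro n; rw [sq_abs]; ring

lemma sumH2 {t : ℝ} (ht : 0 < t) :
    Summable (fun n : ℤ => (π ^ 2 * (n : ℝ) ^ 4) * Real.exp (-π * (n : ℝ) ^ 2 * t)) := by
  apply ((sumInt 4 ht).mul_left (π ^ 2)).congr
  intro n
  have : |(n:ℝ)| ^ 4 = (n:ℝ) ^ 4 := by
    rw [show (4:ℕ) = 2*2 by rfl, pow_mul, pow_mul, sq_abs]
  rw [this]; ring

lemma hasDerivAt_term (n : ℤ) (y : ℝ) :
    HasDerivAt (fun s => Real.exp (-π * (n : ℝ) ^ 2 * s))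
      ((-π * (n : ℝ) ^ 2) * Real.exp (-π * (n : ℝ) ^ 2 * y)) y := by
  have h : HasDerivAt (fun s : ℝ => -π * (n : ℝ) ^ 2 * s) (-π * (n : ℝ) ^ 2) y := by
    have h0 := (hasDerivAt_id y).const_mul (-π * (n : ℝ) ^ 2)
    simp only [mul_one] at h0
    exact h0.congr_of_eventuallyEq (Filter.Eventually.of_forall fun s => by simp)
  have := h.exp
  convert this using 1
  ring

lemma exp_mono_aux (n : ℤ) {a b : ℝ} (hab : a ≤ b) :
    Real.exp (-π * (n : ℝ) ^ 2 * b) ≤ Real.exp (-π * (n : ℝ) ^ 2 * a) := by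
  apply Real.exp_le_exp.mpr
  have h1 : (0:ℝ) ≤ π * (n : ℝ) ^ 2 := by positivity
  nlinarith

lemma hH {t : ℝ} (ht : 0 < t) : HasDerivAt Hf (H1 t) t := by
  have hu : Summable (fun n : ℤ => π * |(n : ℝ)| ^ 2 * Real.exp (-π * (n : ℝ) ^ 2 * (t / 2))) := by
    apply ((sumInt 2 (by linarith : (0:ℝ) < t/2)).mul_left π).congr
    intro n; ring
  have ht2 : t ∈ Set.Ioi (t/2) := by simp; linarith
  refine hasDerivAt_tsum_of_isPreconnected hu isOpen_Ioi isPreconnected_Ioi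
    (g := fun (n : ℤ) s => Real.exp (-π * (n : ℝ) ^ 2 * s))
    (g' := fun (n : ℤ) s => (-π * (n : ℝ) ^ 2) * Real.exp (-π * (n : ℝ) ^ 2 * s))
    (fun n y _ => hasDerivAt_term n y) ?_ ht2 (sumH ht) ht2
  intro n y hy
  have habs : |(-π * (n:ℝ)^2)| = π * (n:ℝ)^2 := by
    rw [abs_of_nonpos (by nlinarith [sq_nonneg ((n:ℝ)), Real.pi_pos] : -π * (n:ℝ)^2 ≤ 0)]; ring
  rw [Real.norm_eq_abs, abs_mul, habs, abs_of_pos (Real.exp_pos _)]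
  simp only [sq_abs]
  have := exp_mono_aux n (le_of_lt hy)
  have h0 : (0:ℝ) ≤ π * (n:ℝ)^2 := by positivity
  calc π * (n:ℝ)^2 * Real.exp (-π * (n:ℝ)^2 * y)
      ≤ π * (n:ℝ)^2 * Real.exp (-π * (n:ℝ)^2 * (t/2)) :=
        mul_le_mul_of_nonneg_left this h0
    _ = π * (n:ℝ)^2 * Real.exp (-π * (n:ℝ)^2 * (t/2)) := rfl

lemma hasDerivAt_term1 (n : ℤ) (y : ℝ) :
    HasDerivAt (fun s => (-π * (n : ℝ) ^ 2) * Real.exp (-π * (n : ℝ) ^ 2 * s))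
      ((π ^ 2 * (n : ℝ) ^ 4) * Real.exp (-π * (n : ℝ) ^ 2 * y)) y := by
  have := (hasDerivAt_term n y).const_mul (-π * (n : ℝ) ^ 2)
  exact this.congr_deriv (by ring)

lemma hH1 {t : ℝ} (ht : 0 < t) : HasDerivAt H1 (H2 t) t := by
  have hu : Summable (fun n : ℤ => π ^ 2 * |(n : ℝ)| ^ 4 * Real.exp (-π * (n : ℝ) ^ 2 * (t / 2))) := by
    apply ((sumInt 4 (by linarith : (0:ℝ) < t/2)).mul_left (π ^ 2)).congr
    intro n; ring
  have ht2 : t ∈ Set.Ioi (t/2) := by simp; linarith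
  refine hasDerivAt_tsum_of_isPreconnected hu isOpen_Ioi isPreconnected_Ioi
    (g := fun (n : ℤ) s => (-π * (n : ℝ) ^ 2) * Real.exp (-π * (n : ℝ) ^ 2 * s))
    (g' := fun (n : ℤ) s => (π ^ 2 * (n : ℝ) ^ 4) * Real.exp (-π * (n : ℝ) ^ 2 * s))
    (fun n y _ => hasDerivAt_term1 n y) ?_ ht2 (sumH1 ht) ht2
  intro n y hy
  have habs : |(π ^ 2 * (n:ℝ)^4)| = π ^ 2 * (n:ℝ)^4 := by
    rw [abs_of_nonneg (by positivity)]
  rw [Real.norm_eq_abs, abs_mul, habs, abs_of_pos (Real.exp_pos _)]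
  have hn4 : |(n:ℝ)| ^ 4 = (n:ℝ) ^ 4 := by
    rw [show (4:ℕ) = 2*2 by rfl, pow_mul, pow_mul, sq_abs]
  simp only [hn4]
  have := exp_mono_aux n (le_of_lt hy)
  have h0 : (0:ℝ) ≤ π ^ 2 * (n:ℝ)^4 := by positivity
  exact mul_le_mul_of_nonneg_left this h0

lemma feH {t : ℝ} (ht : 0 < t) : Hf t⁻¹ = Real.sqrt t * Hf t := by
  have h := Real.tsum_exp_neg_mul_int_sq ht
  have e1 : (∑' n : ℤ, Real.exp (-π * t * (n : ℝ) ^ 2)) = Hf t := by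
    unfold Hf; congr 1; funext n; ring_nf
  have e2 : (∑' n : ℤ, Real.exp (-π / t * (n : ℝ) ^ 2)) = Hf t⁻¹ := by
    unfold Hf; congr 1; funext n; congr 1; field_simp
  rw [e1, e2] at h
  rw [h, Real.sqrt_eq_rpow]
  have hpow : (0:ℝ) < t ^ (1/2 : ℝ) := Real.rpow_pos_of_pos ht _
  field_simp

lemma eq1 {t : ℝ} (ht : 0 < t) :
    H1 t⁻¹ * (-(t ^ 2)⁻¹) = 1 / (2 * Real.sqrt t) * Hf t + Real.sqrt t * H1 t := by
  have d1 : HasDerivAt (fun s => Hf s⁻¹) (H1 t⁻¹ * (-(t ^ 2)⁻¹)) t :=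
    (hH (inv_pos.mpr ht)).comp t (hasDerivAt_inv ht.ne')
  have d2 : HasDerivAt (fun s => Real.sqrt s * Hf s)
      (1 / (2 * Real.sqrt t) * Hf t + Real.sqrt t * H1 t) t :=
    (Real.hasDerivAt_sqrt ht.ne').mul (hH ht)
  have heq : (fun s => Hf s⁻¹) =ᶠ[nhds t] (fun s => Real.sqrt s * Hf s) := by
    filter_upwards [IsOpen.mem_nhds isOpen_Ioi ht] with s hs
    exact feH hs
  exact ((d2.congr_of_eventuallyEq heq).unique d1).symm

lemma eq2 {t : ℝ} (ht : 0 < t) :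
    (H2 t⁻¹ * (-(t ^ 2)⁻¹)) * (-(t ^ 2)⁻¹) + H1 t⁻¹ * (2 * t / (t ^ 2) ^ 2) =
      (-(1 / (2 * Real.sqrt t)) / (2 * Real.sqrt t) ^ 2 * 2) * Hf t
        + 1 / (2 * Real.sqrt t) * H1 t
        + (1 / (2 * Real.sqrt t) * H1 t + Real.sqrt t * H2 t) := by
  have hs0 : Real.sqrt t ≠ 0 := (Real.sqrt_pos.mpr ht).ne'
  have dL : HasDerivAt (fun s => H1 s⁻¹ * (-(s ^ 2)⁻¹))
      ((H2 t⁻¹ * (-(t ^ 2)⁻¹)) * (-(t ^ 2)⁻¹) + H1 t⁻¹ * (2 * t / (t ^ 2) ^ 2)) t := by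
    have a1 : HasDerivAt (fun s : ℝ => H1 s⁻¹) (H2 t⁻¹ * (-(t ^ 2)⁻¹)) t :=
      (hH1 (inv_pos.mpr ht)).comp t (hasDerivAt_inv ht.ne')
    have a2 : HasDerivAt (fun s : ℝ => -(s ^ 2)⁻¹) (2 * t / (t ^ 2) ^ 2) t := by
      have := ((hasDerivAt_pow 2 t).inv (pow_ne_zero 2 ht.ne')).neg
      exact this.congr_deriv (by push_cast; ring)
    exact a1.mul a2
  have dR : HasDerivAt (fun s => 1 / (2 * Real.sqrt s) * Hf s + Real.sqrt s * H1 s)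
      ((-(1 / (2 * Real.sqrt t)) / (2 * Real.sqrt t) ^ 2 * 2) * Hf t
        + 1 / (2 * Real.sqrt t) * H1 t
        + (1 / (2 * Real.sqrt t) * H1 t + Real.sqrt t * H2 t)) t := by
    have b1 : HasDerivAt (fun s : ℝ => 1 / (2 * Real.sqrt s))
        (-(1 / (2 * Real.sqrt t)) / (2 * Real.sqrt t) ^ 2 * 2) t := by
      have c1 : HasDerivAt (fun s : ℝ => 2 * Real.sqrt s) (2 * (1 / (2 * Real.sqrt t))) t :=
        (Real.hasDerivAt_sqrt ht.ne').const_mul 2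
      have c2 := c1.inv (by positivity)
      simp only [one_div]
      exact c2.congr_deriv (by field_simp)
    exact (b1.mul (hH ht)).add ((Real.hasDerivAt_sqrt ht.ne').mul (hH1 ht))
  have heq : (fun s => H1 s⁻¹ * (-(s ^ 2)⁻¹)) =ᶠ[nhds t]
      (fun s => 1 / (2 * Real.sqrt s) * Hf s + Real.sqrt s * H1 s) := by
    filter_upwards [IsOpen.mem_nhds isOpen_Ioi ht] with s hs
    exact eq1 hs
  exact ((dR.congr_of_eventuallyEq heq).unique dL).symm

lemma feG {t : ℝ} (ht : 0 < t) : Real.sqrt t * Gf t = Gf t⁻¹ := by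
  obtain ⟨s, hspos, rfl⟩ : ∃ s : ℝ, 0 < s ∧ s ^ 2 = t :=
    ⟨Real.sqrt t, Real.sqrt_pos.mpr ht, Real.sq_sqrt ht.le⟩
  have hsq : Real.sqrt (s ^ 2) = s := Real.sqrt_sq hspos.le
  have e1 := eq1 ht
  have e2 := eq2 ht
  rw [hsq] at e1 e2 ⊢
  unfold Gf
  set a := Hf (s^2); set b := H1 (s^2); set c := H2 (s^2)
  set B := H1 (s^2)⁻¹; set C := H2 (s^2)⁻¹
  field_simp at e1 e2 ⊢
  have key : s ^ 11 * (s ^ 7 * (s ^ 2 * 2 * c + b * 3)) = s ^ 11 * (2 * C + B * s ^ 2 * 3) := by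
    linear_combination s ^ 11 * ((-(1:ℝ)/2) * e2 + (-(s ^ 2)/2) * e1)
  exact mul_left_cancel₀ (pow_ne_zero 11 hspos.ne') key

lemma int_even {g : ℤ → ℝ} (hs : Summable g) (h0 : g 0 = 0) (he : ∀ n : ℤ, g (-n) = g n) :
    ∑' n : ℤ, g n = 2 * ∑' n : ℕ, g ((n : ℤ) + 1) := by
  have h1 : Summable fun n : ℕ => g (n : ℤ) := hs.comp_injective (Nat.cast_injective : Function.Injective ((↑) : ℕ → ℤ))
  have h2 : Summable fun n : ℕ => g (-((n : ℤ) + 1)) := by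
    apply ((summable_nat_add_iff 1).mpr h1).congr
    intro n
    rw [he]
    push_cast
    ring_nf
  rw [tsum_of_nat_of_neg_add_one h1 h2]
  have e1 : ∑' n : ℕ, g (n : ℤ) = ∑' n : ℕ, g ((n : ℤ) + 1) := by
    rw [Summable.tsum_eq_zero_add h1]
    rw [show ((0:ℕ):ℤ) = 0 by simp, h0, zero_add]
    exact tsum_congr fun n => by push_cast; ring_nf
  have e2 : ∑' n : ℕ, g (-((n : ℤ) + 1)) = ∑' n : ℕ, g ((n : ℤ) + 1) :=
    tsum_congr fun n => he _
  rw [e1, e2]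
  ring

lemma hH1nat {t : ℝ} (ht : 0 < t) :
    H1 t = 2 * ∑' n : ℕ, (-π * ((n : ℝ) + 1) ^ 2) * Real.exp (-π * ((n : ℝ) + 1) ^ 2 * t) := by
  unfold H1
  rw [int_even (sumH1 ht) (by simp) (fun n => by push_cast; ring_nf)]
  congr 1
  exact tsum_congr fun n => by push_cast; ring_nf

lemma hH2nat {t : ℝ} (ht : 0 < t) :
    H2 t = 2 * ∑' n : ℕ, (π ^ 2 * ((n : ℝ) + 1) ^ 4) * Real.exp (-π * ((n : ℝ) + 1) ^ 2 * t) := by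
  unfold H2
  rw [int_even (sumH2 ht) (by simp) (fun n => by push_cast; ring_nf)]
  congr 1
  exact tsum_congr fun n => by push_cast; ring_nf

lemma sumSA {t : ℝ} (ht : 0 < t) :
    Summable (fun n : ℕ => (π ^ 2 * ((n : ℝ) + 1) ^ 4) * Real.exp (-π * ((n : ℝ) + 1) ^ 2 * t)) := by
  apply ((sumNat' 4 ht).mul_left (π ^ 2)).congr
  intro n; ring

lemma sumSB {t : ℝ} (ht : 0 < t) :
    Summable (fun n : ℕ => (-π * ((n : ℝ) + 1) ^ 2) * Real.exp (-π * ((n : ℝ) + 1) ^ 2 * t)) := by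
  apply (((sumNat' 2 ht).mul_left π).neg).congr
  intro n; ring

lemma Theta_eq {x : ℝ} (hx : 0 < x) : Theta x = Gf (x ^ 2) := by
  have ht : 0 < x ^ 2 := by positivity
  unfold Theta Gf
  rw [hH1nat ht, hH2nat ht]
  rw [show (∑' n : ℕ,
      (2 * π ^ 2 * ((n : ℝ) + 1) ^ 4 * x ^ 2 - 3 * π * ((n : ℝ) + 1) ^ 2) *
        Real.exp (-π * ((n : ℝ) + 1) ^ 2 * x ^ 2)) =
      (2 * x ^ 2) * (∑' n : ℕ, (π ^ 2 * ((n : ℝ) + 1) ^ 4) * Real.exp (-π * ((n : ℝ) + 1) ^ 2 * x ^ 2))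
        + 3 * (∑' n : ℕ, (-π * ((n : ℝ) + 1) ^ 2) * Real.exp (-π * ((n : ℝ) + 1) ^ 2 * x ^ 2)) from ?_]
  · ring
  · rw [← tsum_mul_left, ← tsum_mul_left,
      ← Summable.tsum_add ((sumSA ht).mul_left _) ((sumSB ht).mul_left _)]
    exact tsum_congr fun n => by ring

lemma Theta_pos_of_one_le {x : ℝ} (hx : 1 ≤ x) : 0 < Theta x := by
  have hx0 : 0 < x := lt_of_lt_of_le one_pos hx
  have ht : 0 < x ^ 2 := by positivity
  unfold Theta
  have hsum : Summable (fun n : ℕ =>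
      (2 * π ^ 2 * ((n : ℝ) + 1) ^ 4 * x ^ 2 - 3 * π * ((n : ℝ) + 1) ^ 2) *
        Real.exp (-π * ((n : ℝ) + 1) ^ 2 * x ^ 2)) := by
    apply (((sumSA ht).mul_left (2 * x ^ 2)).add ((sumSB ht).mul_left 3)).congr
    intro n; ring
  have hpos : ∀ n : ℕ, 0 < (2 * π ^ 2 * ((n : ℝ) + 1) ^ 4 * x ^ 2 - 3 * π * ((n : ℝ) + 1) ^ 2) *
      Real.exp (-π * ((n : ℝ) + 1) ^ 2 * x ^ 2) := by
    intro n
    apply mul_pos _ (Real.exp_pos _)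
    have h1 : (1 : ℝ) ≤ ((n : ℝ) + 1) ^ 2 := by nlinarith [Nat.cast_nonneg (α := ℝ) n]
    have h2 : (1 : ℝ) ≤ x ^ 2 := by nlinarith
    have hπ := Real.pi_gt_three
    have h4 : ((n:ℝ)+1)^4 = (((n:ℝ)+1)^2)^2 := by ring
    set u := ((n:ℝ)+1)^2 with hu_def
    have hu : u ≤ u ^ 2 * x ^ 2 := by nlinarith
    have hcoef : (0:ℝ) ≤ 2 * π ^ 2 - 3 * π := by nlinarith
    have h5 : 3 * π * u ≤ (2 * π ^ 2 - 3 * π) * u + 3 * π * u := by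
      nlinarith [mul_le_mul_of_nonneg_left h1 hcoef]
    rw [h4]
    nlinarith [mul_le_mul_of_nonneg_left hu (by positivity : (0:ℝ) ≤ 2 * π ^ 2),
      mul_le_mul_of_nonneg_left h1 hcoef]
  apply mul_pos (by positivity)
  exact Summable.tsum_pos hsum (fun n => (hpos n).le) 0 (hpos 0)

theorem stmt_18 (x : ℝ) (hx : 0 < x) : 0 < Theta x := by
  rcases le_or_gt 1 x with h | h
  · exact Theta_pos_of_one_le h
  · have hxinv : 1 ≤ x⁻¹ := (one_le_inv₀ hx).mpr h.le
    have hpos := Theta_pos_of_one_le hxinv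
    have ht : 0 < x ^ 2 := by positivity
    have hfe := feG ht
    rw [Real.sqrt_sq hx.le] at hfe
    have e2 : Theta x⁻¹ = Gf ((x⁻¹) ^ 2) := Theta_eq (inv_pos.mpr hx)
    have e3 : (x ^ 2)⁻¹ = (x⁻¹) ^ 2 := by rw [inv_pow]
    rw [e3] at hfe
    rw [Theta_eq hx]
    nlinarith [hpos, e2, hfe, hx]
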